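/- Let α be an antichain of size m in [n]×[m] (under the componentwise partial order), with 1 ≤ m ≤ n−1. Then the matrix M defined by M_{i,j} = 1 if (i,j) ∈ α and M_{i,j} = 0 otherwise is in reduced reverse column echelon form, has rank m, and satisfies Piv(M) = α. In particular, the set O_α of reduced reverse column echelon matrices with pivot-set α is nonempty. -/
import Mathlib


open Matrix

namespace SchubertCell

/-- The strict down-set of a subset of a poset. -/
def Down {X : Type*} [Preorder X] (Y : Set X) : Set X := {x | ∃ y ∈ Y, x < y}

variable {F : Type*} [Field F] {n : ℕ}

/-- The pivot-set of a matrix: the maximal elements of the support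
under the componentwise (product) order on indices. -/
def Piv (M : Matrix (Fin n) (Fin n) F) : Set (Fin n × Fin n) :=
  {p | M p.1 p.2 ≠ 0 ∧ ∀ q : Fin n × Fin n, p < q → M q.1 q.2 = 0}

/-- Upper triangular matrix. -/
def UpperTri (G : Matrix (Fin n) (Fin n) F) : Prop := ∀ i j : Fin n, j < i → G i j = 0

/-- `M i j` is the last (largest row index) nonzero entry of column `j`. -/
def IsLast (M : Matrix (Fin n) (Fin n) F) (i j : Fin n) : Prop :=
  M i j ≠ 0 ∧ ∀ i' : Fin n, i < i' → M i' j = 0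

/-- Reduced reverse column echelon form: (CE1), (CE2), (CE3). -/
def IsRRCEF (M : Matrix (Fin n) (Fin n) F) : Prop :=
  (∀ j j' : Fin n, j ≤ j' → (∃ i, M i j' ≠ 0) → ∃ i, M i j ≠ 0) ∧
  (∀ i j i' j' : Fin n, IsLast M i j → IsLast M i' j' → j < j' → i' < i) ∧
  (∀ i j : Fin n, IsLast M i j → M i j = 1 ∧ ∀ j' : Fin n, j' ≠ j → M i j' = 0)

/-- `D(α)`: elements of the strict down-set of `α` whose row contains no element of `α`. -/
def DSet (α : Set (Fin n × Fin n)) : Set (Fin n × Fin n) :=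
  {p | p ∈ Down α ∧ ∀ k : Fin n, (p.1, k) ∉ α}

theorem indicator_matrix_of_antichain {F : Type*} [Field F] {n m : ℕ}
    (hm1 : 1 ≤ m) (hm2 : m ≤ n - 1)
    (α : Set (Fin n × Fin n)) (hanti : IsAntichain (· ≤ ·) α)
    (hcol : ∀ p ∈ α, (p.2 : ℕ) < m) (hcard : α.ncard = m)
    (M : Matrix (Fin n) (Fin n) F)
    (hM1 : ∀ p : Fin n × Fin n, p ∈ α → M p.1 p.2 = 1)
    (hM0 : ∀ p : Fin n × Fin n, p ∉ α → M p.1 p.2 = 0) :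
    IsRRCEF M ∧ M.rank = m ∧ Piv M = α := by
  have hn0 : 1 ≤ n := by
    rcases Nat.eq_zero_or_pos n with h | h
    · subst h; omega
    · exact h
  have hmn : m < n := by omega
  -- same column ⇒ equal
  have key1 : ∀ p ∈ α, ∀ q ∈ α, p.2 = q.2 → p = q := by
    intro p hp q hq h2
    by_contra hne
    rcases le_total p.1 q.1 with h | h
    · exact hanti hp hq hne ⟨h, h2.le⟩
    · exact hanti hq hp (Ne.symm hne) ⟨h, h2.ge⟩
  -- same row ⇒ equal
  have key2 : ∀ p ∈ α, ∀ q ∈ α, p.1 = q.1 → p = q := by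
    intro p hp q hq h1
    by_contra hne
    rcases le_total p.2 q.2 with h | h
    · exact hanti hp hq hne ⟨h1.le, h⟩
    · exact hanti hq hp (Ne.symm hne) ⟨h1.ge, h⟩
  -- membership characterization of entries
  have hMne : ∀ i j : Fin n, M i j ≠ 0 ↔ (i, j) ∈ α := by
    intro i j
    constructor
    · intro h
      by_contra hmem
      exact h (hM0 (i, j) hmem)
    · intro h
      rw [hM1 (i, j) h]
      exact one_ne_zero
  -- every column j < m contains an element of α
  have hexist : ∀ j : Fin n, (j : ℕ) < m → ∃ i : Fin n, (i, j) ∈ α := by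
    intro j hj
    have hinj : Set.InjOn Prod.snd α := by
      intro p hp q hq h
      exact key1 p hp q hq h
    have hS : (Prod.snd '' α).ncard = m := by
      rw [Set.ncard_image_of_injOn hinj, hcard]
    have hT : (Set.range (Fin.castLE hmn.le)).ncard = m := by
      rw [← Set.image_univ, Set.ncard_image_of_injective _ (Fin.castLE_injective hmn.le),
        Set.ncard_univ, Nat.card_eq_fintype_card, Fintype.card_fin]
    have hsub : Prod.snd '' α ⊆ Set.range (Fin.castLE hmn.le) := by
      rintro x ⟨p, hp, rfl⟩
      exact ⟨⟨(p.2 : ℕ), hcol p hp⟩, by ext; simp⟩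
    have heq : Prod.snd '' α = Set.range (Fin.castLE hmn.le) :=
      Set.eq_of_subset_of_ncard_le hsub (by rw [hS, hT]) (Set.toFinite _)
    have hjmem : j ∈ Prod.snd '' α := by
      rw [heq]
      exact ⟨⟨(j : ℕ), hj⟩, by ext; simp⟩
    rcases hjmem with ⟨p, hp, h2⟩
    exact ⟨p.1, by rwa [show (p.1, j) = p from by rw [← h2]]⟩
  -- characterization of IsLast
  have hlast : ∀ i j : Fin n, IsLast M i j ↔ (i, j) ∈ α := by
    intro i j
    constructor
    · intro h
      exact (hMne i j).1 h.1
    · intro h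
      refine ⟨(hMne i j).2 h, fun i' hi' => hM0 (i', j) fun hmem => ?_⟩
      have := key1 (i, j) h (i', j) hmem rfl
      exact absurd (congrArg Prod.fst this) (Fin.ne_of_lt hi')
  refine ⟨⟨?_, ?_, ?_⟩, ?_, ?_⟩
  · -- CE1
    intro j j' hjj' ⟨i, hi⟩
    have hj' := hcol _ ((hMne i j').1 hi)
    have hj : (j : ℕ) < m := lt_of_le_of_lt (by exact_mod_cast hjj') hj'
    obtain ⟨i0, hi0⟩ := hexist j hj
    exact ⟨i0, (hMne i0 j).2 hi0⟩
  · -- CE2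
    intro i j i' j' h h' hjj'
    have hmem := (hlast i j).1 h
    have hmem' := (hlast i' j').1 h'
    by_contra hle
    push_neg at hle
    exact hanti hmem hmem' (by intro heq; exact absurd (congrArg Prod.snd heq) (Fin.ne_of_lt hjj'))
      ⟨hle, hjj'.le⟩
  · -- CE3
    intro i j h
    have hmem := (hlast i j).1 h
    refine ⟨hM1 (i, j) hmem, fun j' hj' => hM0 (i, j') fun hmem' => ?_⟩
    exact hj' (congrArg Prod.snd (key2 (i, j') hmem' (i, j) hmem rfl))
  · -- rank
    have hrowex : ∀ a : Fin m, ∃ i : Fin n, (i, Fin.castLE hmn.le a) ∈ α := by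
      intro a
      exact hexist _ (by simpa using a.isLt)
    choose row hrow using hrowex
    -- upper bound
    have hzero : ∀ i j : Fin n, m ≤ (j : ℕ) → M i j = 0 := by
      intro i j hj
      refine hM0 (i, j) fun hmem => ?_
      have h : (j : ℕ) < m := hcol (i, j) hmem
      omega
    have hfac : M = (M.submatrix id (Fin.castLE hmn.le)) *
        ((1 : Matrix (Fin n) (Fin n) F).submatrix (Fin.castLE hmn.le) id) := by
      ext i j
      rw [Matrix.mul_apply]
      simp only [Matrix.submatrix_apply, id_eq, Matrix.one_apply]
      by_cases hj : (j : ℕ) < m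
      · have : ∀ a : Fin m, Fin.castLE hmn.le a = j ↔ a = ⟨(j : ℕ), hj⟩ := by
          intro a
          constructor
          · intro h; ext; simpa using congrArg Fin.val h
          · intro h; subst h; ext; simp
        simp only [this, mul_ite, mul_one, mul_zero]
        rw [Finset.sum_ite_eq' Finset.univ (⟨(j : ℕ), hj⟩ : Fin m)]
        simp
      · rw [hzero i j (by omega)]
        symm
        apply Finset.sum_eq_zero
        intro a _
        have : Fin.castLE hmn.le a ≠ j := by
          intro h
          apply hj
          rw [← h]
          simpa using a.isLt
        simp [this]
    have hub : M.rank ≤ m := by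
      rw [hfac]
      exact le_trans (Matrix.rank_mul_le_right _ _)
        (le_trans (Matrix.rank_le_card_height _) (by simp))
    -- lower bound
    have hlb : (m : ℕ) ≤ M.rank := by
      set R : Matrix (Fin m) (Fin n) F := Matrix.of fun a i => if i = row a then 1 else 0 with hR
      set C : Matrix (Fin n) (Fin m) F :=
        Matrix.of fun j b => if j = Fin.castLE hmn.le b then 1 else 0 with hC
      have hid : R * (M * C) = 1 := by
        ext a b
        rw [Matrix.mul_apply]
        simp only [hR, Matrix.of_apply, ite_mul, one_mul, zero_mul]
        rw [Finset.sum_ite_eq' Finset.univ (row a)]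
        simp only [Finset.mem_univ, if_true]
        rw [Matrix.mul_apply]
        simp only [hC, Matrix.of_apply, mul_ite, mul_one, mul_zero]
        rw [Finset.sum_ite_eq' Finset.univ (Fin.castLE hmn.le b)]
        simp only [Finset.mem_univ, if_true]
        by_cases hab : a = b
        · subst hab
          rw [hM1 _ (hrow a), Matrix.one_apply_eq]
        · rw [Matrix.one_apply_ne hab]
          refine hM0 (row a, Fin.castLE hmn.le b) fun hmem => ?_
          apply hab
          have := key2 _ (hrow a) _ hmem rfl
          have h2 := congrArg Prod.snd this
          simp only at h2
          exact Fin.castLE_injective hmn.le h2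
      calc (m : ℕ) = (1 : Matrix (Fin m) (Fin m) F).rank := by
            rw [Matrix.rank_one, Fintype.card_fin]
        _ = (R * (M * C)).rank := by rw [hid]
        _ ≤ (M * C).rank := Matrix.rank_mul_le_right _ _
        _ ≤ M.rank := Matrix.rank_mul_le_left _ _
    omega
  · -- Piv = α
    ext p
    constructor
    · intro ⟨h1, _⟩
      exact (hMne p.1 p.2).1 h1
    · intro hp
      refine ⟨(hMne p.1 p.2).2 hp, fun q hq => ?_⟩
      refine hM0 q fun hmem => ?_
      exact hanti hp hmem (ne_of_lt hq) (le_of_lt hq)
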